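/- Let X_1, X_2, … be identically distributed real random variables with common continuous cdf F, and suppose that for some p ≥ 1 and some α ∈ (1, p] one has E(|X_1|^{p/α}) < ∞. Let a_X = sup{x : F(x)=0}, b_X = inf{x : F(x)=1}, and suppose h_0 : ℝ → ℝ is absolutely continuous on [a_X, b_X] with Radon–Nikodym derivative h_0* satisfying ∫_{a_X}^{b_X} |h_0*(x)|^{α/(α−1)} dx < ∞. Then B⁰_{n,p} := n^{-1/p} Σ_{t=2}^n |h_0(X_{t:n}) − h_0(X_{t-1:n})| is bounded in probability as n → ∞, where X_{1:n} < ⋯ < X_{n:n} denote the order statistics of X_1, …, X_n. -/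

import Mathlib

open MeasureTheory ProbabilityTheory Filter
open scoped Classical

/-- The `t`-th order statistic (1-based) of `X 1, …, X n`. -/
noncomputable def orderStat {Ω : Type*} (X : ℕ → Ω → ℝ) (n t : ℕ) (ω : Ω) : ℝ :=
  (List.insertionSort (· ≤ ·) ((List.range n).map fun s => X (s + 1) ω)).getD (t - 1) 0

/-- The cumulative distribution function of a random variable `X` under `P`. -/
noncomputable def cdfOf {Ω : Type*} [MeasurableSpace Ω] (P : Measure Ω) (X : Ω → ℝ) : ℝ → ℝ :=
  fun x => (P {ω | X ω ≤ x}).toReal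

/-- Lower endpoint `a_X = sup {x : F x = 0}` of the support of a cdf `F`. -/
noncomputable def lowerEnd (F : ℝ → ℝ) : EReal :=
  sSup ((fun x : ℝ => (x : EReal)) '' {x | F x = 0})

/-- Upper endpoint `b_X = inf {x : F x = 1}` of the support of a cdf `F`. -/
noncomputable def upperEnd (F : ℝ → ℝ) : EReal :=
  sInf ((fun x : ℝ => (x : EReal)) '' {x | F x = 1})

/-- `Z n` is bounded in probability (O_P(1)). -/
def BoundedInProb {Ω : Type*} [MeasurableSpace Ω] (P : Measure Ω) (Z : ℕ → Ω → ℝ) : Prop :=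
  ∀ ε : ℝ, 0 < ε → ∃ M : ℝ, 0 < M ∧
    ∀ᶠ n in atTop, P {ω | M < |Z n ω|} ≤ ENNReal.ofReal ε

theorem os_len {Ω : Type*} (X : ℕ → Ω → ℝ) (n : ℕ) (ω : Ω) :
    (List.insertionSort (· ≤ ·) ((List.range n).map fun s => X (s + 1) ω)).length = n := by
  rw [List.length_insertionSort, List.length_map, List.length_range]

theorem os_mono {Ω : Type*} (X : ℕ → Ω → ℝ) (n : ℕ) (ω : Ω) {s t : ℕ}
    (hs : 1 ≤ s) (hst : s ≤ t) (ht : t ≤ n) : orderStat X n s ω ≤ orderStat X n t ω := by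
  rcases eq_or_lt_of_le hst with rfl | h
  · exact le_refl _
  unfold orderStat
  have hl := os_len X n ω
  rw [List.getD_eq_getElem _ _ (by omega), List.getD_eq_getElem _ _ (by omega)]
  exact List.Pairwise.rel_get_of_lt (List.pairwise_insertionSort _ _) (by simp; omega)

theorem os_mem {Ω : Type*} (X : ℕ → Ω → ℝ) (n : ℕ) (ω : Ω) {t : ℕ}
    (ht1 : 1 ≤ t) (ht : t ≤ n) : ∃ s, 1 ≤ s ∧ s ≤ n ∧ orderStat X n t ω = X s ω := by
  have hl := os_len X n ω
  have hmem : orderStat X n t ω ∈ (List.insertionSort (· ≤ ·) ((List.range n).map fun s => X (s + 1) ω)) := by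
    unfold orderStat
    rw [List.getD_eq_getElem _ _ (by omega)]
    exact List.getElem_mem _
  rw [(List.perm_insertionSort _ _).mem_iff, List.mem_map] at hmem
  obtain ⟨s, hs, hval⟩ := hmem
  rw [List.mem_range] at hs
  exact ⟨s + 1, by omega, by omega, hval.symm⟩

section AuxCdf
variable {Ω : Type*} [MeasurableSpace Ω] (P : Measure Ω) [IsProbabilityMeasure P]
  (Y : Ω → ℝ) (hY : Measurable Y)

theorem cdf_zero_null {x : ℝ} (h : cdfOf P Y x = 0) : P {ω | Y ω ≤ x} = 0 := by
  have := (ENNReal.toReal_eq_zero_iff _).mp h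
  rcases this with h | h
  · exact h
  · exact absurd h (measure_ne_top P _)

theorem cdf_mono : Monotone (cdfOf P Y) := by
  intro u v huv
  exact ENNReal.toReal_mono (measure_ne_top P _) (measure_mono (fun ω hω => le_trans hω huv))

theorem lower_null : P {ω | (Y ω : EReal) < lowerEnd (cdfOf P Y)} = 0 := by
  set F := cdfOf P Y
  have hsub : {ω | (Y ω : EReal) < lowerEnd F} ⊆
      ⋃ q : ℚ, if F q = 0 then {ω | Y ω ≤ (q : ℝ)} else ∅ := by
    intro ω hω
    simp only [Set.mem_setOf_eq, lowerEnd, lt_sSup_iff] at hω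
    obtain ⟨y, ⟨x, hx, rfl⟩, hlt⟩ := hω
    rw [EReal.coe_lt_coe_iff] at hlt
    obtain ⟨q, hq1, hq2⟩ := exists_rat_btwn hlt
    refine Set.mem_iUnion.mpr ⟨q, ?_⟩
    have hFq : F q = 0 := le_antisymm (hx ▸ cdf_mono P Y hq2.le) (ENNReal.toReal_nonneg)
    simp [hFq, hq1.le]
  refine measure_mono_null hsub (measure_iUnion_null fun q => ?_)
  split_ifs with h
  · exact cdf_zero_null P Y h
  · simp

theorem upper_null (hY : Measurable Y) : P {ω | upperEnd (cdfOf P Y) < (Y ω : EReal)} = 0 := by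
  set F := cdfOf P Y
  have hsub : {ω | upperEnd F < (Y ω : EReal)} ⊆
      ⋃ q : ℚ, if F q = 1 then {ω | (q : ℝ) < Y ω} else ∅ := by
    intro ω hω
    simp only [Set.mem_setOf_eq, upperEnd, sInf_lt_iff] at hω
    obtain ⟨y, ⟨x, hx, rfl⟩, hlt⟩ := hω
    rw [EReal.coe_lt_coe_iff] at hlt
    obtain ⟨q, hq1, hq2⟩ := exists_rat_btwn hlt
    refine Set.mem_iUnion.mpr ⟨q, ?_⟩
    have h1 : F q ≤ 1 := by
      apply ENNReal.toReal_le_of_le_ofReal one_pos.le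
      simp [ENNReal.ofReal_one, prob_le_one]
    have hFq : F q = 1 := le_antisymm h1 (hx ▸ cdf_mono P Y hq1.le)
    simp [hFq, hq2]
  refine measure_mono_null hsub (measure_iUnion_null fun q => ?_)
  split_ifs with h
  · have h1 : P {ω | Y ω ≤ (q:ℝ)} = 1 := by
      have := (ENNReal.toReal_eq_one_iff _).mp h
      exact this
    have : P {ω | (q:ℝ) < Y ω} = 1 - P {ω | Y ω ≤ (q:ℝ)} := by
      have hc : {ω | (q:ℝ) < Y ω} = {ω | Y ω ≤ (q:ℝ)}ᶜ := by
        ext ω; simp [not_le]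
      rw [hc, measure_compl (s := {ω | Y ω ≤ (q:ℝ)}) (hY measurableSet_Iic) (measure_ne_top P _), measure_univ]
    rw [this, h1]; simp
  · simp

theorem lower_ne_top : lowerEnd (cdfOf P Y) ≠ ⊤ := by
  intro h
  set F := cdfOf P Y
  have key : ∀ n : ℕ, P {ω | Y ω ≤ (n : ℝ)} = 0 := by
    intro n
    have : ((n:ℝ) : EReal) < lowerEnd F := h ▸ EReal.coe_lt_top _
    rw [lowerEnd, lt_sSup_iff] at this
    obtain ⟨y, ⟨x, hx, rfl⟩, hlt⟩ := this
    rw [EReal.coe_lt_coe_iff] at hlt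
    have : F n = 0 := le_antisymm (hx ▸ cdf_mono P Y hlt.le) ENNReal.toReal_nonneg
    exact cdf_zero_null P Y this
  have : P (⋃ n : ℕ, {ω | Y ω ≤ (n:ℝ)}) = 0 := measure_iUnion_null key
  have huniv : (⋃ n : ℕ, {ω | Y ω ≤ (n:ℝ)}) = Set.univ := by
    ext ω; simp only [Set.mem_iUnion, Set.mem_setOf_eq, Set.mem_univ, iff_true]
    exact exists_nat_ge (Y ω)
  rw [huniv, measure_univ] at this
  exact one_ne_zero this

theorem upper_ne_bot (hY : Measurable Y) : upperEnd (cdfOf P Y) ≠ ⊥ := by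
  intro h
  set F := cdfOf P Y
  have key : ∀ n : ℕ, P {ω | (-(n:ℝ)) < Y ω} = 0 := by
    intro n
    have : upperEnd F < ((-(n:ℝ)) : EReal) := h ▸ EReal.bot_lt_coe _
    rw [upperEnd, sInf_lt_iff] at this
    obtain ⟨y, ⟨x, hx, rfl⟩, hlt⟩ := this
    have hlt' : x < -(n:ℝ) := by
      have h2 : (x:EReal) < ((-(n:ℝ)):EReal) := by push_cast; simpa using hlt
      exact EReal.coe_lt_coe_iff.mp h2
    have h1 : F (-(n:ℝ)) ≤ 1 := by
      apply ENNReal.toReal_le_of_le_ofReal one_pos.le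
      simp [ENNReal.ofReal_one, prob_le_one]
    have hF : F (-(n:ℝ)) = 1 := le_antisymm h1 (hx ▸ cdf_mono P Y hlt'.le)
    have h2 : P {ω | Y ω ≤ (-(n:ℝ))} = 1 := (ENNReal.toReal_eq_one_iff _).mp hF
    have hc : {ω | (-(n:ℝ)) < Y ω} = {ω | Y ω ≤ (-(n:ℝ))}ᶜ := by ext ω; simp [not_le]
    rw [hc, measure_compl (s := {ω | Y ω ≤ (-(n:ℝ))}) (hY measurableSet_Iic) (measure_ne_top P _), measure_univ, h2]
    simp
  have : P (⋃ n : ℕ, {ω | (-(n:ℝ)) < Y ω}) = 0 := measure_iUnion_null key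
  have huniv : (⋃ n : ℕ, {ω | (-(n:ℝ)) < Y ω}) = Set.univ := by
    ext ω; simp only [Set.mem_iUnion, Set.mem_setOf_eq, Set.mem_univ, iff_true]
    obtain ⟨n, hn⟩ := exists_nat_ge (-(Y ω))
    exact ⟨n+1, by push_cast; linarith⟩
  rw [huniv, measure_univ] at this
  exact one_ne_zero this

end AuxCdf

theorem le_one_add_rpow (t β : ℝ) (ht : 0 ≤ t) (hβ : 1 ≤ β) : t ≤ 1 + t ^ β := by
  rcases le_or_gt t 1 with h | h
  · nlinarith [Real.rpow_nonneg ht β]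
  · have h2 : t ^ (1:ℝ) ≤ t ^ β := Real.rpow_le_rpow_of_exponent_le h.le hβ
    rw [Real.rpow_one] at h2
    linarith

theorem beta_ge_one {α : ℝ} (hα : 1 < α) : 1 ≤ α / (α - 1) := by
  rw [le_div_iff₀ (by linarith)]; linarith

theorem gInt (h0star : ℝ → ℝ) (hmeas0 : Measurable h0star) (α : ℝ) (hα : 1 < α) (S : Set ℝ)
    (hint : IntegrableOn (fun x => |h0star x| ^ (α/(α-1))) S volume)
    (u v : ℝ) (hsub : Set.Icc u v ⊆ S) :
    IntegrableOn (fun z => |h0star z|) (Set.Icc u v) volume := by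
  have hbound : IntegrableOn (fun z => 1 + |h0star z| ^ (α/(α-1))) (Set.Icc u v) volume :=
    (integrableOn_const measure_Icc_lt_top.ne).add (hint.mono_set hsub)
  refine Integrable.mono' hbound (hmeas0.abs).aestronglyMeasurable ?_
  refine ae_of_all _ fun z => ?_
  rw [Real.norm_eq_abs, abs_abs]
  exact le_one_add_rpow _ _ (abs_nonneg _) (beta_ge_one hα)

theorem memLp_g (h0star : ℝ → ℝ) (hmeas0 : Measurable h0star) (α : ℝ) (hα : 1 < α) (S : Set ℝ)
    (hint : IntegrableOn (fun x => |h0star x| ^ (α/(α-1))) S volume)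
    (u v : ℝ) (hsub : Set.Ioc u v ⊆ S) :
    MemLp (fun z => |h0star z|) (ENNReal.ofReal (α/(α-1))) (volume.restrict (Set.Ioc u v)) := by
  set β := α/(α-1) with hβdef
  have hβpos : 0 < β := lt_of_lt_of_le one_pos (beta_ge_one hα)
  have hne0 : ENNReal.ofReal β ≠ 0 := by simp [ENNReal.ofReal_eq_zero, not_le, hβpos]
  have hneT : ENNReal.ofReal β ≠ ⊤ := ENNReal.ofReal_ne_top
  have h1 : MemLp (fun z => ‖|h0star z|‖ ^ (ENNReal.ofReal β).toReal)
      ((ENNReal.ofReal β) / (ENNReal.ofReal β)) (volume.restrict (Set.Ioc u v)) := by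
    rw [ENNReal.div_self hne0 hneT, memLp_one_iff_integrable]
    have : IntegrableOn (fun z => |h0star z| ^ β) (Set.Ioc u v) volume := hint.mono_set hsub
    have heq : (fun z => ‖|h0star z|‖ ^ (ENNReal.ofReal β).toReal) = fun z => |h0star z| ^ β := by
      funext z
      rw [Real.norm_eq_abs, abs_abs, ENNReal.toReal_ofReal hβpos.le]
    rw [heq]
    exact this
  exact (memLp_norm_rpow_iff (hmeas0.abs).aestronglyMeasurable hne0 hneT).mp h1

theorem holder_core (h0star : ℝ → ℝ) (hmeas0 : Measurable h0star) (α : ℝ) (hα : 1 < α) (S : Set ℝ)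
    (hint : IntegrableOn (fun x => |h0star x| ^ (α/(α-1))) S volume)
    (u v : ℝ) (huv : u ≤ v) (hsub : Set.Ioc u v ⊆ S) :
    ∫ z in Set.Ioc u v, |h0star z| ≤
      (∫ z in S, |h0star z| ^ (α/(α-1))) ^ ((α-1)/α) * (v - u) ^ (1/α) := by
  set β := α/(α-1) with hβdef
  have hα0 : (0:ℝ) < α := by linarith
  have hconj : β.HolderConjugate α := (Real.HolderConjugate.conjExponent hα).symm
  haveI : IsFiniteMeasure (volume.restrict (Set.Ioc u v)) :=
    ⟨by rw [Measure.restrict_apply_univ]; exact measure_Ioc_lt_top⟩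
  have H := integral_mul_le_Lp_mul_Lq_of_nonneg (μ := volume.restrict (Set.Ioc u v)) hconj
      (f := fun z => |h0star z|) (g := fun _ => (1:ℝ))
      (ae_of_all _ fun z => abs_nonneg _) (ae_of_all _ fun z => zero_le_one)
      (memLp_g h0star hmeas0 α hα S hint u v hsub) (memLp_const 1)
  simp only [mul_one, Real.one_rpow, integral_const, measure_univ, smul_eq_mul] at H
  rw [measureReal_def, Measure.restrict_apply_univ, Real.volume_Ioc, ENNReal.toReal_ofReal (by linarith)] at H
  have h2 : ∫ z in Set.Ioc u v, |h0star z| ^ β ≤ ∫ z in S, |h0star z| ^ β := by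
    refine setIntegral_mono_set hint (ae_of_all _ fun z => Real.rpow_nonneg (abs_nonneg _) _) ?_
    exact HasSubset.Subset.eventuallyLE hsub
  have h3 : (∫ z in Set.Ioc u v, |h0star z| ^ β) ^ (1/β) ≤ (∫ z in S, |h0star z| ^ β) ^ (1/β) := by
    refine Real.rpow_le_rpow ?_ h2 (one_div_nonneg.mpr (le_trans zero_le_one (beta_ge_one hα)))
    exact integral_nonneg fun z => Real.rpow_nonneg (abs_nonneg _) _
  have hβinv : 1/β = (α-1)/α := by
    rw [hβdef, one_div_div]
  calc ∫ z in Set.Ioc u v, |h0star z|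
      ≤ (∫ z in Set.Ioc u v, |h0star z| ^ β) ^ (1/β) * (v-u) ^ (1/α) := H
    _ ≤ (∫ z in S, |h0star z| ^ β) ^ ((α-1)/α) * (v - u) ^ (1/α) :=
        mul_le_mul_of_nonneg_right (hβinv ▸ h3) (Real.rpow_nonneg (by linarith) _)

theorem key_det (h0 h0star : ℝ → ℝ) (hmeas0 : Measurable h0star) (α : ℝ) (hα : 1 < α) (S : Set ℝ)
    (hconn : ∀ ⦃u v w : ℝ⦄, u ∈ S → v ∈ S → u ≤ w → w ≤ v → w ∈ S)
    (hint : IntegrableOn (fun x => |h0star x| ^ (α/(α-1))) S volume)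
    (hAC' : ∀ u v : ℝ, u ≤ v → u ∈ S → v ∈ S → h0 v - h0 u = ∫ z in Set.Icc u v, h0star z)
    (n : ℕ) (hn : 2 ≤ n) (x : ℕ → ℝ)
    (hmono : ∀ s t : ℕ, 1 ≤ s → s ≤ t → t ≤ n → x s ≤ x t)
    (hmem : ∀ t : ℕ, 1 ≤ t → t ≤ n → x t ∈ S) :
    ∑ t ∈ Finset.Icc 2 n, |h0 (x t) - h0 (x (t-1))| ≤
      (∫ z in S, |h0star z| ^ (α/(α-1))) ^ ((α-1)/α) * (x n - x 1) ^ (1/α) := by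
  have hicc_sub : ∀ s t : ℕ, 1 ≤ s → s ≤ t → t ≤ n → Set.Icc (x s) (x t) ⊆ S := by
    intro s t h1 h2 h3 z hz
    exact hconn (hmem s h1 (le_trans h2 h3)) (hmem t (le_trans h1 h2) h3) hz.1 hz.2
  have step : ∀ t : ℕ, 2 ≤ t → t ≤ n →
      |h0 (x t) - h0 (x (t-1))| ≤ ∫ z in Set.Ioc (x (t-1)) (x t), |h0star z| := by
    intro t h2 hle
    have hle' : x (t-1) ≤ x t := hmono (t-1) t (by omega) (by omega) hle
    have hm1 : x (t-1) ∈ S := hmem _ (by omega) (by omega)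
    have hm2 : x t ∈ S := hmem _ (by omega) hle
    rw [hAC' _ _ hle' hm1 hm2]
    calc |∫ z in Set.Icc (x (t-1)) (x t), h0star z|
        ≤ ∫ z in Set.Icc (x (t-1)) (x t), |h0star z| := by
          simpa [Real.norm_eq_abs] using
            norm_integral_le_integral_norm (μ := volume.restrict (Set.Icc (x (t-1)) (x t))) h0star
      _ = ∫ z in Set.Ioc (x (t-1)) (x t), |h0star z| := integral_Icc_eq_integral_Ioc
  have sum_le : ∑ t ∈ Finset.Icc 2 n, |h0 (x t) - h0 (x (t-1))| ≤
      ∑ t ∈ Finset.Icc 2 n, ∫ z in Set.Ioc (x (t-1)) (x t), |h0star z| :=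
    Finset.sum_le_sum fun t ht => step t (Finset.mem_Icc.mp ht).1 (Finset.mem_Icc.mp ht).2
  have hII : ∀ k : ℕ, k < n - 1 → IntervalIntegrable (fun z => |h0star z|) volume (x (k+1)) (x (k+2)) := by
    intro k hk
    have hle : x (k+1) ≤ x (k+2) := hmono (k+1) (k+2) (by omega) (by omega) (by omega)
    refine IntegrableOn.intervalIntegrable ?_
    rw [Set.uIcc_of_le hle]
    exact gInt h0star hmeas0 α hα S hint _ _ (hicc_sub (k+1) (k+2) (by omega) (by omega) (by omega))
  have htel : ∑ t ∈ Finset.Icc 2 n, ∫ z in Set.Ioc (x (t-1)) (x t), |h0star z|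
      = ∫ z in Set.Ioc (x 1) (x n), |h0star z| := by
    have h1 : ∑ t ∈ Finset.Icc 2 n, ∫ z in Set.Ioc (x (t-1)) (x t), |h0star z|
        = ∑ k ∈ Finset.range (n-1), ∫ z in (x (k+1))..(x (k+2)), |h0star z| := by
      rw [show Finset.Icc 2 n = Finset.Ico 2 (n+1) by rfl, Finset.sum_Ico_eq_sum_range]
      refine Finset.sum_congr (by rw [show n+1-2 = n-1 by omega]) fun k hk => ?_
      rw [Finset.mem_range] at hk
      have e1 : 2+k-1 = k+1 := by omega
      have e2 : 2+k = k+2 := by omega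
      rw [e1, e2, intervalIntegral.integral_of_le (hmono (k+1) (k+2) (by omega) (by omega) (by omega))]
    rw [h1, intervalIntegral.sum_integral_adjacent_intervals (a := fun k => x (k+1)) (n := n-1) hII]
    rw [show n - 1 + 1 = n by omega]
    rw [intervalIntegral.integral_of_le (hmono 1 n (by omega) (by omega) le_rfl)]
  refine le_trans sum_le ?_
  rw [htel]
  exact holder_core h0star hmeas0 α hα S hint _ _ (hmono 1 n (by omega) (by omega) le_rfl)
    (fun z hz => hconn (hmem 1 (by omega) (by omega)) (hmem n (by omega) le_rfl) hz.1.le hz.2)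

theorem tail_bound {Ω : Type*} [MeasurableSpace Ω] (P : Measure Ω) [IsProbabilityMeasure P]
    (Y : Ω → ℝ) (r : ℝ) (hr : 0 < r)
    (hmom : Integrable (fun ω => |Y ω| ^ r) P) (c : ℝ) (hc : 0 < c) :
    P {ω | c < |Y ω|} ≤ ENNReal.ofReal ((∫ ω, |Y ω| ^ r ∂P) / c ^ r) := by
  have hsub : {ω | c < |Y ω|} ⊆ {ω | c ^ r ≤ |Y ω| ^ r} := by
    intro ω hω
    exact Real.rpow_le_rpow hc.le (le_of_lt hω) hr.le
  refine le_trans (measure_mono hsub) ?_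
  have hmarkov := mul_meas_ge_le_integral_of_nonneg
    (ae_of_all P fun ω => Real.rpow_nonneg (abs_nonneg (Y ω)) r) hmom (c ^ r)
  have hcr : 0 < c ^ r := Real.rpow_pos_of_pos hc r
  rw [ENNReal.le_ofReal_iff_toReal_le (measure_ne_top P _) ?_]
  · rw [le_div_iff₀ hcr]
    calc (P {ω | c ^ r ≤ |Y ω| ^ r}).toReal * c ^ r
        = c ^ r * (P {ω | c ^ r ≤ |Y ω| ^ r}).toReal := mul_comm _ _
      _ ≤ _ := hmarkov
  · positivity

theorem stmt_2 {Ω : Type*} [MeasurableSpace Ω] (P : Measure Ω) [IsProbabilityMeasure P]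
    (X : ℕ → Ω → ℝ) (hmeas : ∀ t, Measurable (X t))
    (hid : ∀ t : ℕ, 1 ≤ t → IdentDistrib (X t) (X 1) P P)
    (hcont : Continuous (cdfOf P (X 1)))
    (p α : ℝ) (hp : 1 ≤ p) (hα : 1 < α) (hαp : α ≤ p)
    (hmom : Integrable (fun ω => |X 1 ω| ^ (p / α)) P)
    (h0 h0star : ℝ → ℝ) (hmeas0 : Measurable h0star)
    (hAC : ∀ u v : ℝ, u ≤ v →
      lowerEnd (cdfOf P (X 1)) ≤ (u : EReal) → (v : EReal) ≤ upperEnd (cdfOf P (X 1)) →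
      h0 v - h0 u = ∫ x in Set.Icc u v, h0star x)
    (hint : IntegrableOn (fun x => |h0star x| ^ (α / (α - 1)))
      {x : ℝ | lowerEnd (cdfOf P (X 1)) ≤ (x : EReal) ∧
        (x : EReal) ≤ upperEnd (cdfOf P (X 1))} volume) :
    BoundedInProb P (fun n ω => (n : ℝ) ^ (-(1 / p)) *
      ∑ t ∈ Finset.Icc 2 n, |h0 (orderStat X n t ω) - h0 (orderStat X n (t - 1) ω)|) := by
  classical
  set F := cdfOf P (X 1) with hF
  set a := lowerEnd F with ha
  set b := upperEnd F with hb
  set S : Set ℝ := {x : ℝ | a ≤ (x : EReal) ∧ (x : EReal) ≤ b} with hSdef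
  have hα0 : (0:ℝ) < α := by linarith
  have hp0 : (0:ℝ) < p := by linarith
  have hS_conn : ∀ ⦃u v w : ℝ⦄, u ∈ S → v ∈ S → u ≤ w → w ≤ v → w ∈ S := by
    intro u v w hu hv huw hwv
    exact ⟨le_trans hu.1 (EReal.coe_le_coe_iff.mpr huw),
           le_trans (EReal.coe_le_coe_iff.mpr hwv) hv.2⟩
  have hAC' : ∀ u v : ℝ, u ≤ v → u ∈ S → v ∈ S →
      h0 v - h0 u = ∫ z in Set.Icc u v, h0star z := fun u v h hu hv => hAC u v h hu.1 hv.2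
  have hintS : IntegrableOn (fun x => |h0star x| ^ (α/(α-1))) S volume := hint
  -- the good event
  set G : Set Ω := {ω | ∀ t : ℕ, 1 ≤ t → X t ω ∈ S} with hG
  have hGnull : P Gᶜ = 0 := by
    have hsub : Gᶜ ⊆ ⋃ t : ℕ,
        (if 1 ≤ t then ({ω | (X t ω : EReal) < a} ∪ {ω | b < (X t ω : EReal)}) else ∅) := by
      intro ω hω
      simp only [hG, Set.mem_compl_iff, Set.mem_setOf_eq, not_forall] at hω
      obtain ⟨t, ht, hbad⟩ := hω
      refine Set.mem_iUnion.mpr ⟨t, ?_⟩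
      rw [if_pos ht]
      simp only [hSdef, Set.mem_setOf_eq, not_and_or, not_le] at hbad
      rcases hbad with h | h
      · exact Or.inl h
      · exact Or.inr h
    refine measure_mono_null hsub (measure_iUnion_null fun t => ?_)
    split_ifs with ht
    · have hlo : MeasurableSet {y : ℝ | (y : EReal) < a} :=
        measurable_coe_real_ereal measurableSet_Iio
      have hhi : MeasurableSet {y : ℝ | b < (y : EReal)} :=
        measurable_coe_real_ereal measurableSet_Ioi
      have e1 : P {ω | (X t ω : EReal) < a} = 0 := by
        have := (hid t ht).measure_mem_eq hlo
        calc P {ω | (X t ω : EReal) < a} = P (X t ⁻¹' {y : ℝ | (y : EReal) < a}) := rfl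
          _ = P (X 1 ⁻¹' {y : ℝ | (y : EReal) < a}) := this
          _ = 0 := lower_null P (X 1)
      have e2 : P {ω | b < (X t ω : EReal)} = 0 := by
        have := (hid t ht).measure_mem_eq hhi
        calc P {ω | b < (X t ω : EReal)} = P (X t ⁻¹' {y : ℝ | b < (y : EReal)}) := rfl
          _ = P (X 1 ⁻¹' {y : ℝ | b < (y : EReal)}) := this
          _ = 0 := upper_null P (X 1) (hmeas 1)
      exact measure_union_null e1 e2
    · simp
  -- constants
  set C : ℝ := (∫ z in S, |h0star z| ^ (α/(α-1))) ^ ((α-1)/α) with hC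
  have hC0 : 0 ≤ C :=
    Real.rpow_nonneg (integral_nonneg fun z => Real.rpow_nonneg (abs_nonneg _) _) _
  set E : ℝ := ∫ ω, |X 1 ω| ^ (p/α) ∂P with hE
  have hE0 : 0 ≤ E := integral_nonneg fun ω => Real.rpow_nonneg (abs_nonneg _) _
  intro ε hε
  set K : ℝ := ((E+1)/ε) ^ (α/p) + 1 with hK
  have hK0 : 0 < K := by positivity
  set M : ℝ := (C+1) * (2*K) ^ (1/α) + 1 with hM
  have hM0 : 0 < M := by positivity
  refine ⟨M, hM0, ?_⟩
  filter_upwards [eventually_ge_atTop 2] with n hn2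
  set Z : Ω → ℝ := fun ω => (n : ℝ) ^ (-(1 / p)) *
      ∑ t ∈ Finset.Icc 2 n, |h0 (orderStat X n t ω) - h0 (orderStat X n (t - 1) ω)| with hZ
  have hn1 : (1:ℝ) ≤ (n:ℝ) := by exact_mod_cast le_trans (by norm_num) hn2
  have hnpos : (0:ℝ) < (n:ℝ) := by linarith
  set c : ℝ := K * (n:ℝ) ^ (α/p) with hc
  have hcpos : 0 < c := mul_pos hK0 (Real.rpow_pos_of_pos hnpos _)
  have hnonempty : (Finset.Icc 1 n).Nonempty := ⟨1, by simp; omega⟩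
  -- Claim 1 : inclusion
  have claim1 : {ω | M < |Z ω|} ∩ G ⊆ ⋃ t ∈ Finset.Icc 1 n, {ω | c < |X t ω|} := by
    intro ω hω
    obtain ⟨hA, hGω⟩ := hω
    set x : ℕ → ℝ := fun t => orderStat X n t ω with hx
    have hmono' : ∀ s t : ℕ, 1 ≤ s → s ≤ t → t ≤ n → x s ≤ x t :=
      fun s t h1 h2 h3 => os_mono X n ω h1 h2 h3
    have hmem' : ∀ t : ℕ, 1 ≤ t → t ≤ n → x t ∈ S := by
      intro t h1 h2
      obtain ⟨s, hs1, hs2, hval⟩ := os_mem X n ω h1 h2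
      rw [show x t = X s ω from hval]
      exact hGω s hs1
    have key := key_det h0 h0star hmeas0 α hα S hS_conn hintS hAC' n hn2 x hmono' hmem'
    set mx : ℝ := (Finset.Icc 1 n).sup' hnonempty (fun t => |X t ω|) with hmx
    have hmx0 : 0 ≤ mx :=
      le_trans (abs_nonneg _) (Finset.le_sup' (fun t => |X t ω|) (by simp; omega : 1 ∈ Finset.Icc 1 n))
    have hxd : x n - x 1 ≤ 2 * mx := by
      obtain ⟨s, hs1, hs2, hval⟩ := os_mem X n ω (by omega : 1 ≤ n) le_rfl
      obtain ⟨s', hs1', hs2', hval'⟩ := os_mem X n ω (le_refl 1) (by omega)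
      have h1 : x n ≤ mx := by
        rw [show x n = X s ω from hval]
        exact le_trans (le_abs_self _) (Finset.le_sup' (fun t => |X t ω|) (Finset.mem_Icc.mpr ⟨hs1, hs2⟩))
      have h2 : -mx ≤ x 1 := by
        rw [show x 1 = X s' ω from hval']
        exact le_trans (neg_le_neg (Finset.le_sup' (fun t => |X t ω|)
          (Finset.mem_Icc.mpr ⟨hs1', hs2'⟩))) (neg_abs_le _)
      linarith
    have hx1n : x 1 ≤ x n := hmono' 1 n le_rfl (by omega) le_rfl
    have hsum0 : 0 ≤ ∑ t ∈ Finset.Icc 2 n, |h0 (x t) - h0 (x (t-1))| :=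
      Finset.sum_nonneg fun t _ => abs_nonneg _
    have hZval : Z ω = (n : ℝ) ^ (-(1 / p)) *
        ∑ t ∈ Finset.Icc 2 n, |h0 (x t) - h0 (x (t-1))| := rfl
    have hZnn : 0 ≤ Z ω := by
      rw [hZval]
      exact mul_nonneg (Real.rpow_nonneg (Nat.cast_nonneg n) _) hsum0
    rw [Set.mem_setOf_eq, abs_of_nonneg hZnn] at hA
    -- bound Z ω
    have hsum_le : ∑ t ∈ Finset.Icc 2 n, |h0 (x t) - h0 (x (t-1))| ≤ (C+1) * (2*mx) ^ (1/α) := by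
      refine le_trans key ?_
      have h1 : (x n - x 1) ^ (1/α) ≤ (2*mx) ^ (1/α) :=
        Real.rpow_le_rpow (by linarith) hxd (by positivity)
      calc C * (x n - x 1) ^ (1/α) ≤ C * (2*mx) ^ (1/α) :=
            mul_le_mul_of_nonneg_left h1 hC0
        _ ≤ (C+1) * (2*mx) ^ (1/α) :=
            mul_le_mul_of_nonneg_right (by linarith) (Real.rpow_nonneg (by linarith) _)
    have hnp : (0:ℝ) < (n:ℝ) ^ (1/p) := Real.rpow_pos_of_pos hnpos _
    have hZle : Z ω ≤ ((C+1) * (2*mx) ^ (1/α)) / (n:ℝ) ^ (1/p) := by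
      rw [hZval, Real.rpow_neg (le_of_lt hnpos), inv_mul_eq_div, div_le_div_iff₀ hnp hnp]
      exact mul_le_mul_of_nonneg_right hsum_le (le_of_lt hnp)
    have hMlt : M * (n:ℝ) ^ (1/p) < (C+1) * (2*mx) ^ (1/α) := by
      rw [← lt_div_iff₀ hnp]
      exact lt_of_lt_of_le hA hZle
    have hdiv : (M / (C+1)) * (n:ℝ) ^ (1/p) < (2*mx) ^ (1/α) := by
      rw [div_mul_eq_mul_div, div_lt_iff₀ (by linarith : (0:ℝ) < C+1)]
      calc M * (n:ℝ) ^ (1/p) < (C+1) * (2*mx) ^ (1/α) := hMlt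
        _ = (2*mx) ^ (1/α) * (C+1) := mul_comm _ _
    have hlhs0 : 0 < (M / (C+1)) * (n:ℝ) ^ (1/p) := by positivity
    have hpow : ((M / (C+1)) * (n:ℝ) ^ (1/p)) ^ α < 2*mx := by
      have h1 := Real.rpow_lt_rpow (le_of_lt hlhs0) hdiv hα0
      have h2 : ((2*mx) ^ (1/α)) ^ α = 2*mx := by
        rw [← Real.rpow_mul (by positivity : (0:ℝ) ≤ 2*mx), one_div,
          inv_mul_cancel₀ (ne_of_gt hα0), Real.rpow_one]
      rwa [h2] at h1
    have hMC : 2*K ≤ (M / (C+1)) ^ α := by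
      have h1 : (2*K) ^ (1/α) ≤ M / (C+1) := by
        rw [le_div_iff₀ (by linarith : (0:ℝ) < C+1), mul_comm]
        rw [hM]; linarith
      calc 2*K = ((2*K) ^ (1/α)) ^ α := by
            rw [← Real.rpow_mul (by positivity), one_div,
              inv_mul_cancel₀ (ne_of_gt hα0), Real.rpow_one]
        _ ≤ (M / (C+1)) ^ α := Real.rpow_le_rpow (by positivity) h1 (le_of_lt hα0)
    have hexp : ((M / (C+1)) * (n:ℝ) ^ (1/p)) ^ α = (M / (C+1)) ^ α * (n:ℝ) ^ (α/p) := by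
      rw [Real.mul_rpow (by positivity) (le_of_lt hnp),
        ← Real.rpow_mul (le_of_lt hnpos), one_div, inv_mul_eq_div]
    have hfinal : 2 * (K * (n:ℝ) ^ (α/p)) < 2 * mx := by
      calc 2 * (K * (n:ℝ) ^ (α/p)) = (2*K) * (n:ℝ) ^ (α/p) := by ring
        _ ≤ (M / (C+1)) ^ α * (n:ℝ) ^ (α/p) :=
            mul_le_mul_of_nonneg_right hMC (Real.rpow_nonneg (le_of_lt hnpos) _)
        _ = ((M / (C+1)) * (n:ℝ) ^ (1/p)) ^ α := hexp.symm
        _ < 2*mx := hpow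
    have hmxgt : c < mx := by rw [hc]; linarith
    obtain ⟨t, htmem, hteq⟩ := Finset.exists_mem_eq_sup' hnonempty (fun t => |X t ω|)
    refine Set.mem_biUnion htmem ?_
    rw [Set.mem_setOf_eq, ← hteq]
    exact hmxgt
  -- Claim 2 : probability bound
  have claim2 : P (⋃ t ∈ Finset.Icc 1 n, {ω | c < |X t ω|}) ≤ ENNReal.ofReal ε := by
    refine le_trans (measure_biUnion_finset_le _ _) ?_
    have heach : ∀ t ∈ Finset.Icc 1 n, P {ω | c < |X t ω|} ≤ ENNReal.ofReal (E / c ^ (p/α)) := by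
      intro t ht
      rw [Finset.mem_Icc] at ht
      have hset : MeasurableSet {y : ℝ | c < |y|} := measurable_abs measurableSet_Ioi
      have heq : P {ω | c < |X t ω|} = P {ω | c < |X 1 ω|} := by
        have := (hid t ht.1).measure_mem_eq hset
        exact this
      rw [heq]
      exact tail_bound P (X 1) (p/α) (by positivity) hmom c hcpos
    refine le_trans (Finset.sum_le_sum heach) ?_
    rw [Finset.sum_const, Nat.card_Icc]
    have hcr : c ^ (p/α) = K ^ (p/α) * (n:ℝ) := by
      rw [hc, Real.mul_rpow (le_of_lt hK0) (Real.rpow_nonneg (le_of_lt hnpos) _),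
        ← Real.rpow_mul (le_of_lt hnpos)]
      congr 1
      rw [div_mul_div_comm, mul_comm α p, div_self (by positivity), Real.rpow_one]
    have hKpa : (E+1)/ε ≤ K ^ (p/α) := by
      have h1 : ((E+1)/ε) ^ (α/p) ≤ K := by rw [hK]; linarith
      calc (E+1)/ε = (((E+1)/ε) ^ (α/p)) ^ (p/α) := by
            rw [← Real.rpow_mul (by positivity), div_mul_div_comm, mul_comm α p,
              div_self (by positivity), Real.rpow_one]
        _ ≤ K ^ (p/α) := Real.rpow_le_rpow (by positivity) h1 (by positivity)
    have hEK : E / c ^ (p/α) * (n:ℝ) ≤ ε := by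
      rw [hcr]
      have hKp0 : 0 < K ^ (p/α) := Real.rpow_pos_of_pos hK0 _
      have hsimp : E / (K ^ (p/α) * (n:ℝ)) * (n:ℝ) = E / K ^ (p/α) := by
        rw [div_mul_eq_mul_div, div_eq_div_iff (by positivity) (ne_of_gt hKp0)]
        ring
      rw [hsimp, div_le_iff₀ hKp0]
      calc E ≤ E + 1 := by linarith
        _ = ε * ((E+1)/ε) := by field_simp
        _ ≤ ε * K ^ (p/α) := mul_le_mul_of_nonneg_left hKpa (le_of_lt hε)
    calc ((n + 1 - 1) : ℕ) • ENNReal.ofReal (E / c ^ (p/α))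
        = (n : ENNReal) * ENNReal.ofReal (E / c ^ (p/α)) := by
          rw [nsmul_eq_mul]; norm_num
      _ = ENNReal.ofReal ((n:ℝ) * (E / c ^ (p/α))) := by
          rw [← ENNReal.ofReal_natCast n, ← ENNReal.ofReal_mul (Nat.cast_nonneg n)]
      _ ≤ ENNReal.ofReal ε := ENNReal.ofReal_le_ofReal (by rw [mul_comm]; exact hEK)
  -- conclude
  calc P {ω | M < |Z ω|}
      ≤ P ((⋃ t ∈ Finset.Icc 1 n, {ω | c < |X t ω|}) ∪ Gᶜ) := by
        refine measure_mono fun ω hω => ?_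
        by_cases hg : ω ∈ G
        · exact Or.inl (claim1 ⟨hω, hg⟩)
        · exact Or.inr hg
    _ ≤ P (⋃ t ∈ Finset.Icc 1 n, {ω | c < |X t ω|}) + P Gᶜ := measure_union_le _ _
    _ = P (⋃ t ∈ Finset.Icc 1 n, {ω | c < |X t ω|}) := by rw [hGnull, add_zero]
    _ ≤ ENNReal.ofReal ε := claim2
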